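/- Let V be a ℤ_{≥0}-graded conformal vertex algebra with V₀ = ℂ𝟙, and suppose Zhu's C₂-algebra R_V = V/C₂(V) is finite-dimensional. Then every graded component of gr_F A(V) is finite-dimensional and the filtration F_• A(V) stabilizes, so Zhu's algebra A(V) is finite-dimensional. -/
import Mathlib


/-- The generalized binomial coefficient `(p choose i)` for `p : ℤ`, as a complex number. -/
noncomputable def cc (p : ℤ) (i : ℕ) : ℂ :=
  (∏ k ∈ Finset.range i, ((p : ℂ) - (k : ℂ))) / (Nat.factorial i : ℂ)

/-- A vertex algebra structure on a complex vector space `V`: a vacuum `one`,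
bilinear products `nmul n a b = a_{(n)} b`, truncation, vacuum axioms, and the
Borcherds identity. -/
structure VertexAlg (V : Type*) [AddCommGroup V] [Module ℂ V] where
  one : V
  nmul : ℤ → V → V → V
  nmul_add_left : ∀ (n : ℤ) (a b c : V), nmul n (a + b) c = nmul n a c + nmul n b c
  nmul_add_right : ∀ (n : ℤ) (a b c : V), nmul n a (b + c) = nmul n a b + nmul n a c
  nmul_smul_left : ∀ (n : ℤ) (s : ℂ) (a b : V), nmul n (s • a) b = s • nmul n a b
  nmul_smul_right : ∀ (n : ℤ) (s : ℂ) (a b : V), nmul n a (s • b) = s • nmul n a b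
  one_nmul : ∀ (n : ℤ) (b : V), nmul n one b = if n = -1 then b else 0
  nmul_neg_one_one : ∀ a : V, nmul (-1) a one = a
  nmul_one : ∀ (a : V) (n : ℤ), 0 ≤ n → nmul n a one = 0
  trunc : ∀ a b : V, ∃ N : ℤ, ∀ n : ℤ, N ≤ n → nmul n a b = 0
  borcherds : ∀ (p q r : ℤ) (a b c : V),
    (∑ᶠ i : ℕ, cc p i • nmul (p + q - i) (nmul (r + i) a b) c)
      = ∑ᶠ i : ℕ, ((-1 : ℂ) ^ i * cc r i) •
          (nmul (p + r - i) a (nmul (q + i) b c)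
            - ((-1 : ℂ) ^ r) • nmul (q + r - i) b (nmul (p + i) a c))

/-- A module over a vertex algebra `(V, 𝒱)`: operators `act n a = a_{(n)}` on `M`
satisfying bilinearity, the vacuum axiom, truncation and the Borcherds identity. -/
structure VAModuleStr {V : Type*} [AddCommGroup V] [Module ℂ V] (𝒱 : VertexAlg V)
    (M : Type*) [AddCommGroup M] [Module ℂ M] where
  act : ℤ → V → M → M
  act_add_left : ∀ (n : ℤ) (a b : V) (m : M), act n (a + b) m = act n a m + act n b m
  act_add_right : ∀ (n : ℤ) (a : V) (m m' : M), act n a (m + m') = act n a m + act n a m'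
  act_smul_left : ∀ (n : ℤ) (s : ℂ) (a : V) (m : M), act n (s • a) m = s • act n a m
  act_smul_right : ∀ (n : ℤ) (s : ℂ) (a : V) (m : M), act n a (s • m) = s • act n a m
  one_act : ∀ (n : ℤ) (m : M), act n 𝒱.one m = if n = -1 then m else 0
  trunc : ∀ (a : V) (m : M), ∃ N : ℤ, ∀ n : ℤ, N ≤ n → act n a m = 0
  borcherds : ∀ (p q r : ℤ) (a b : V) (m : M),
    (∑ᶠ i : ℕ, cc p i • act (p + q - i) (𝒱.nmul (r + i) a b) m)
      = ∑ᶠ i : ℕ, ((-1 : ℂ) ^ i * cc r i) •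
          (act (p + r - i) a (act (q + i) b m)
            - ((-1 : ℂ) ^ r) • act (q + r - i) b (act (p + i) a m))

namespace Stmt19

lemma cc_zero (d : ℕ) : cc d 0 = 1 := by simp [cc]
lemma cc_one (d : ℕ) : cc d 1 = (d : ℂ) := by simp [cc]
lemma cc_eq_zero {d i : ℕ} (h : d < i) : cc d i = 0 := by
  unfold cc
  rw [Finset.prod_eq_zero (Finset.mem_range.2 h) (by push_cast; ring)]
  simp
noncomputable def rho (j f : ℕ) : ℂ := ∏ k ∈ Finset.range j, ((f : ℂ) + (k : ℂ))
lemma rho_zero (f : ℕ) : rho 0 f = 1 := by simp [rho]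
lemma rho_succ (j f : ℕ) : rho (j+1) f = rho j f * ((f : ℂ) + (j : ℂ)) := by
  simp [rho, Finset.prod_range_succ]
lemma rho_succ' (j m : ℕ) : rho (j+1) m = (m : ℂ) * rho j (m+1) := by
  unfold rho
  rw [Finset.prod_range_succ' (fun k => ((m : ℂ) + (k : ℂ))) j, mul_comm]
  congr 1
  · push_cast; ring_nf
  · push_cast; ring

variable {V : Type*} [AddCommGroup V] [Module ℂ V] (𝒱 : VertexAlg V) (Vd : ℕ → Submodule ℂ V)
  (OV C2V : Submodule ℂ V)

noncomputable def Top : V →ₗ[ℂ] V where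
  toFun v := 𝒱.nmul (-2) v 𝒱.one
  map_add' a b := 𝒱.nmul_add_left _ _ _ _
  map_smul' s a := 𝒱.nmul_smul_left _ _ _ _
lemma Top_apply (v : V) : Top 𝒱 v = 𝒱.nmul (-2) v 𝒱.one := rfl

section Hyp
variable (hgr : ∀ (d e : ℕ) (n : ℤ) (a b : V), a ∈ Vd d → b ∈ Vd e →
      𝒱.nmul n a b ∈ ⨆ (d' : ℕ) (_ : (d' : ℤ) = (d : ℤ) + e - n - 1), Vd d')
  (hzero : Vd 0 = Submodule.span ℂ {𝒱.one})
  (hOV : OV = Submodule.span ℂ {y : V | ∃ (d : ℕ) (a b : V), a ∈ Vd d ∧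
      y = ∑ᶠ i : ℕ, cc (d : ℤ) i • 𝒱.nmul ((i : ℤ) - 2) a b})

include hgr in
lemma hgrW {d e w : ℕ} {a b : V} (n : ℤ) (ha : a ∈ Vd d) (hb : b ∈ Vd e)
    (hw : (w : ℤ) = (d : ℤ) + e - n - 1) : 𝒱.nmul n a b ∈ Vd w := by
  have h := hgr d e n a b ha hb
  have hle : (⨆ (d' : ℕ) (_ : (d' : ℤ) = (d : ℤ) + e - n - 1), Vd d') ≤ Vd w := by
    apply iSup₂_le
    intro d' hd'
    have : d' = w := by exact_mod_cast hd'.trans hw.symm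
    exact this ▸ le_rfl
  exact hle h

include hgr in
lemma hgr0 {d e : ℕ} {a b : V} (n : ℤ) (ha : a ∈ Vd d) (hb : b ∈ Vd e)
    (hneg : (d : ℤ) + e - n - 1 < 0) : 𝒱.nmul n a b = 0 := by
  have h := hgr d e n a b ha hb
  have hle : (⨆ (d' : ℕ) (_ : (d' : ℤ) = (d : ℤ) + e - n - 1), Vd d') ≤ ⊥ := by
    apply iSup₂_le
    intro d' hd'
    exfalso
    have : (0 : ℤ) ≤ d' := Int.natCast_nonneg d'
    omega
  simpa using hle h

include hzero in
lemma one_mem_Vd0 : 𝒱.one ∈ Vd 0 := by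
  rw [hzero]; exact Submodule.mem_span_singleton_self _

include hzero hgr in
lemma Top_mem {m : ℕ} {z : V} (hz : z ∈ Vd m) : Top 𝒱 z ∈ Vd (m+1) := by
  rw [Top_apply]
  exact hgrW 𝒱 Vd hgr (-2) hz (one_mem_Vd0 𝒱 Vd hzero) (by push_cast; ring)

include hzero in
lemma Top_zeroweight {z : V} (hz : z ∈ Vd 0) : Top 𝒱 z = 0 := by
  rw [hzero, Submodule.mem_span_singleton] at hz
  obtain ⟨c, rfl⟩ := hz
  rw [map_smul, Top_apply, 𝒱.one_nmul]
  simp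

include hOV in
lemma gen_mem_OV {d : ℕ} {a : V} (ha : a ∈ Vd d) (b : V) :
    (∑ i ∈ Finset.range (d+1), cc d i • 𝒱.nmul ((i : ℤ) - 2) a b) ∈ OV := by
  have hs : (∑ᶠ i : ℕ, cc d i • 𝒱.nmul ((i : ℤ) - 2) a b)
      = ∑ i ∈ Finset.range (d+1), cc d i • 𝒱.nmul ((i : ℤ) - 2) a b := by
    apply finsum_eq_finset_sum_of_support_subset
    intro i hi
    simp only [Function.mem_support] at hi
    by_contra hmem
    have hd : d < i := by simpa using hmem
    exact hi (by rw [cc_eq_zero hd, zero_smul])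
  rw [hOV]
  exact Submodule.subset_span ⟨d, a, b, ha, hs.symm⟩

include hOV hzero in
lemma T_rel {m : ℕ} {z : V} (hz : z ∈ Vd m) : Top 𝒱 z + (m : ℂ) • z ∈ OV := by
  rcases Nat.eq_zero_or_pos m with hm | hm
  · subst hm
    rw [Top_zeroweight 𝒱 Vd hzero hz]
    simpa using OV.zero_mem
  · have h := gen_mem_OV 𝒱 Vd OV hOV hz 𝒱.one
    have hsum : (∑ i ∈ Finset.range (m+1), cc m i • 𝒱.nmul ((i : ℤ) - 2) z 𝒱.one)
        = Top 𝒱 z + (m : ℂ) • z := by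
      rw [← Finset.sum_subset (Finset.range_subset_range.2 (by omega) :
            Finset.range 2 ⊆ Finset.range (m+1))
          (fun i _ hi => by
            rw [𝒱.nmul_one _ _ (by simp only [Finset.mem_range, not_lt] at hi; omega),
              smul_zero])]
      rw [Finset.sum_range_succ, Finset.sum_range_one]
      norm_num [cc_zero, cc_one, 𝒱.nmul_neg_one_one, Top_apply]
    rwa [hsum] at h

include hOV hzero hgr in
lemma Tpow_mem {m : ℕ} {z : V} (hz : z ∈ Vd m) (j : ℕ) : (Top 𝒱 ^ j) z ∈ Vd (m + j) := by
  induction j generalizing m z with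
  | zero => simpa using hz
  | succ j ih =>
    have : (Top 𝒱 ^ (j+1)) z = (Top 𝒱 ^ j) (Top 𝒱 z) := by
      rw [pow_succ, Module.End.mul_apply]
    rw [this, show m + (j+1) = (m+1) + j by omega]
    exact ih (Top_mem 𝒱 Vd hgr hzero hz)

include hOV hzero hgr in
lemma Tpow_rel {m : ℕ} {z : V} (hz : z ∈ Vd m) (j : ℕ) :
    (Top 𝒱 ^ j) z - (((-1 : ℂ)) ^ j * rho j m) • z ∈ OV := by
  induction j generalizing m z with
  | zero =>
    rw [pow_zero, pow_zero, rho_zero, one_mul, Module.End.one_apply, one_smul, sub_self]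
    exact OV.zero_mem
  | succ j ih =>
    have e : (Top 𝒱 ^ (j+1)) z = (Top 𝒱 ^ j) (Top 𝒱 z) := by
      rw [pow_succ, Module.End.mul_apply]
    have h1 := ih (Top_mem 𝒱 Vd hgr hzero hz)
    have h2 := T_rel 𝒱 Vd OV hzero hOV hz
    have key : (Top 𝒱 ^ (j+1)) z - (((-1 : ℂ)) ^ (j+1) * rho (j+1) m) • z
        = ((Top 𝒱 ^ j) (Top 𝒱 z) - (((-1 : ℂ)) ^ j * rho j (m+1)) • (Top 𝒱 z))
          + (((-1 : ℂ)) ^ j * rho j (m+1)) • (Top 𝒱 z + (m : ℂ) • z) := by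
      rw [e, rho_succ']
      module
    rw [key]
    exact add_mem h1 (OV.smul_mem _ h2)

include hOV hzero hgr in
lemma poly_rel (s : Finset ℕ) (x : ℕ → V) (hx : ∀ f ∈ s, x f ∈ Vd f)
    (hsum : ∑ f ∈ s, x f = 0) (j : ℕ) : (∑ f ∈ s, rho j f • x f) ∈ OV := by
  have hA : (∑ f ∈ s, ((Top 𝒱 ^ j) (x f) - (((-1 : ℂ)) ^ j * rho j f) • x f)) ∈ OV :=
    Submodule.sum_mem _ fun f hf => Tpow_rel 𝒱 Vd OV hgr hzero hOV (hx f hf) j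
  have hz : ∑ f ∈ s, (Top 𝒱 ^ j) (x f) = 0 := by rw [← map_sum, hsum, map_zero]
  rw [Finset.sum_sub_distrib, hz, zero_sub] at hA
  have h2 := OV.smul_mem (((-1 : ℂ)) ^ j) (neg_mem hA)
  rw [neg_neg, Finset.smul_sum] at h2
  have hpow : ((-1 : ℂ)) ^ j * ((-1 : ℂ)) ^ j = 1 := by
    rw [← pow_add, show j + j = 2*j by ring, pow_mul]; norm_num
  have : (∑ f ∈ s, ((-1 : ℂ)) ^ j • (((-1 : ℂ)) ^ j * rho j f) • x f)
      = ∑ f ∈ s, rho j f • x f := by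
    refine Finset.sum_congr rfl fun f _ => ?_
    rw [smul_smul, ← mul_assoc, hpow, one_mul]
  rwa [this] at h2
include hOV hzero hgr in
lemma ridge : ∀ (n : ℕ) (s : Finset ℕ) (x : ℕ → V), s.card = n → (∀ f ∈ s, x f ∈ Vd f) →
    (∀ j : ℕ, (∑ f ∈ s, rho j f • x f) ∈ OV) → ∀ f ∈ s, x f ∈ OV := by
  intro n
  induction n with
  | zero =>
    intro s x hc _ _ f hf
    rw [Finset.card_eq_zero.mp hc] at hf
    simp at hf
  | succ n ih =>
    intro s x hc hx hR f₀ hf₀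
    set s' := s.erase f₀ with hs'
    have hcard : s'.card = n := by
      rw [hs', Finset.card_erase_of_mem hf₀, hc]
      omega
    set x' : ℕ → V := fun f => (((f : ℂ) - (f₀ : ℂ))) • x f with hx'def
    have hx' : ∀ f ∈ s', x' f ∈ Vd f := fun f hf =>
      Submodule.smul_mem _ _ (hx f (Finset.mem_of_mem_erase hf))
    have hR' : ∀ j, (∑ f ∈ s', rho j f • x' f) ∈ OV := by
      intro j
      have hstep : ∀ f : ℕ, rho j f • x' f
          = rho (j+1) f • x f - ((f₀ : ℂ) + j) • (rho j f • x f) := by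
        intro f
        show rho j f • (((f : ℂ) - (f₀ : ℂ)) • x f) = _
        rw [smul_smul, smul_smul, ← sub_smul, rho_succ]
        congr 1
        ring
      have hz : rho j f₀ • x' f₀ = 0 := by
        rw [hx'def]; simp
      have heq : (∑ f ∈ s', rho j f • x' f)
          = ∑ f ∈ s, (rho (j+1) f • x f - ((f₀ : ℂ) + j) • (rho j f • x f)) :=
        (Finset.sum_erase (f := fun f => rho j f • x' f) (a := f₀) s hz).trans (Finset.sum_congr rfl fun f _ => hstep f)
      rw [heq, Finset.sum_sub_distrib, ← Finset.smul_sum]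
      exact sub_mem (hR (j+1)) (OV.smul_mem _ (hR j))
    have hothers : ∀ f ∈ s', x f ∈ OV := by
      intro f hf
      have hne : ((f : ℂ) - (f₀ : ℂ)) ≠ 0 := by
        rw [sub_ne_zero]
        exact_mod_cast fun h => (Finset.ne_of_mem_erase hf) (by exact_mod_cast h)
      have h := OV.smul_mem ((f : ℂ) - (f₀ : ℂ))⁻¹ (ih s' x' hcard hx' hR' f hf)
      rwa [hx'def, smul_smul, inv_mul_cancel₀ hne, one_smul] at h
    have h0 : (∑ f ∈ s, x f) ∈ OV := by
      have := hR 0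
      simpa [rho_zero] using this
    have hsplit : x f₀ = (∑ f ∈ s, x f) - ∑ f ∈ s', x f := by
      rw [← Finset.add_sum_erase _ _ hf₀, hs']
      abel
    rw [hsplit]
    exact sub_mem h0 (Submodule.sum_mem _ hothers)

include hOV hzero hgr in
lemma compZero {s : Finset ℕ} {x : ℕ → V} (hx : ∀ f ∈ s, x f ∈ Vd f)
    (hsum : ∑ f ∈ s, x f = 0) : ∀ f ∈ s, x f ∈ OV :=
  ridge 𝒱 Vd OV hgr hzero hOV s.card s x rfl hx
    (poly_rel 𝒱 Vd OV hgr hzero hOV s x hx hsum)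

include hOV hzero hgr in
lemma decUnique {s t : Finset ℕ} {x y : ℕ → V} (hx : ∀ f ∈ s, x f ∈ Vd f)
    (hy : ∀ f ∈ t, y f ∈ Vd f) (h : ∑ f ∈ s, x f = ∑ f ∈ t, y f) :
    ∀ f : ℕ, (if f ∈ s then x f else 0) - (if f ∈ t then y f else 0) ∈ OV := by
  classical
  set z : ℕ → V := fun f => (if f ∈ s then x f else 0) - (if f ∈ t then y f else 0) with hzdef
  have hz : ∀ f ∈ s ∪ t, z f ∈ Vd f := by
    intro f _
    apply sub_mem
    · split
      · exact hx f ‹_›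
      · exact (Vd f).zero_mem
    · split
      · exact hy f ‹_›
      · exact (Vd f).zero_mem
  have hsum : ∑ f ∈ s ∪ t, z f = 0 := by
    rw [hzdef]
    rw [Finset.sum_sub_distrib]
    rw [Finset.sum_ite_mem, Finset.sum_ite_mem]
    rw [Finset.union_inter_cancel_left, Finset.union_inter_cancel_right]
    rw [h, sub_self]
  intro f
  by_cases hf : f ∈ s ∪ t
  · exact compZero 𝒱 Vd OV hgr hzero hOV hz hsum f hf
  · have hfs : f ∉ s := fun hc => hf (Finset.mem_union_left _ hc)
    have hft : f ∉ t := fun hc => hf (Finset.mem_union_right _ hc)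
    simp [hzdef, hfs, hft]

lemma dec_of_mem_biSup {P : ℕ → Prop} {v : V} (hv : v ∈ ⨆ d, ⨆ (_ : P d), Vd d) :
    ∃ (s : Finset ℕ) (x : ℕ → V), (∀ f ∈ s, P f) ∧ (∀ f ∈ s, x f ∈ Vd f) ∧
      v = ∑ f ∈ s, x f := by
  classical
  rw [Submodule.mem_iSup_iff_exists_finsupp] at hv
  obtain ⟨g, hg, hsum⟩ := hv
  refine ⟨g.support, g, ?_, ?_, ?_⟩
  · intro f hf
    by_contra hP
    have h := hg f
    rw [iSup_neg hP] at h
    exact Finsupp.mem_support_iff.mp hf (by simpa using h)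
  · intro f hf
    have h := hg f
    by_cases hP : P f
    · rwa [iSup_pos hP] at h
    · rw [iSup_neg hP] at h
      simp only [Submodule.mem_bot] at h
      rw [h]; exact (Vd f).zero_mem
  · exact hsum.symm

omit hgr hzero hOV

end Hyp

noncomputable def W (p : ℕ) : Submodule ℂ V := ⨆ d, ⨆ (_ : d ≤ p), Vd d

noncomputable def Wm (p : ℕ) : Submodule ℂ V := ⨆ d, ⨆ (_ : d < p), Vd d

lemma Vd_le_W {d p : ℕ} (h : d ≤ p) : Vd d ≤ W Vd p :=
  le_iSup₂ (f := fun d (_ : d ≤ p) => Vd d) d h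

lemma Vd_le_Wm {d p : ℕ} (h : d < p) : Vd d ≤ Wm Vd p :=
  le_iSup₂ (f := fun d (_ : d < p) => Vd d) d h

lemma Wm_le_W (p : ℕ) : Wm Vd p ≤ W Vd p :=
  iSup₂_le fun d hd => Vd_le_W Vd hd.le

def GS (w : ℕ) : Set V :=
  {y | ∃ (d e : ℕ) (a b : V), a ∈ Vd d ∧ b ∈ Vd e ∧ d + e + 1 = w ∧ y = 𝒱.nmul (-2) a b}

def MS (w : ℕ) : Set V :=
  {y | ∃ (d e : ℕ) (a b : V), a ∈ Vd d ∧ b ∈ Vd e ∧ d + e + 1 ≤ w ∧ y = 𝒱.nmul (-2) a b}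

noncomputable def M' (w : ℕ) : Submodule ℂ V := Submodule.span ℂ (MS 𝒱 Vd w)

lemma M'_mono {w w' : ℕ} (h : w ≤ w') : M' 𝒱 Vd w ≤ M' 𝒱 Vd w' :=
  Submodule.span_mono fun y ⟨d, e, a, b, ha, hb, hle, hy⟩ => ⟨d, e, a, b, ha, hb, hle.trans h, hy⟩

lemma MS_split (w : ℕ) : MS 𝒱 Vd (w+1) = MS 𝒱 Vd w ∪ GS 𝒱 Vd (w+1) := by
  ext y
  constructor
  · rintro ⟨d, e, a, b, ha, hb, hle, hy⟩
    rcases Nat.lt_or_ge (d + e + 1) (w + 1) with h | h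
    · exact Or.inl ⟨d, e, a, b, ha, hb, by omega, hy⟩
    · exact Or.inr ⟨d, e, a, b, ha, hb, by omega, hy⟩
  · rintro (⟨d, e, a, b, ha, hb, hle, hy⟩ | ⟨d, e, a, b, ha, hb, heq, hy⟩)
    · exact ⟨d, e, a, b, ha, hb, by omega, hy⟩
    · exact ⟨d, e, a, b, ha, hb, by omega, hy⟩

lemma M'_succ (w : ℕ) :
    M' 𝒱 Vd (w+1) = M' 𝒱 Vd w ⊔ Submodule.span ℂ (GS 𝒱 Vd (w+1)) := by
  rw [M', MS_split, Submodule.span_union]; rfl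

section Hyp2
variable (hgr : ∀ (d e : ℕ) (n : ℤ) (a b : V), a ∈ Vd d → b ∈ Vd e →
      𝒱.nmul n a b ∈ ⨆ (d' : ℕ) (_ : (d' : ℤ) = (d : ℤ) + e - n - 1), Vd d')
  (hzero : Vd 0 = Submodule.span ℂ {𝒱.one})
  (hOV : OV = Submodule.span ℂ {y : V | ∃ (d : ℕ) (a b : V), a ∈ Vd d ∧
      y = ∑ᶠ i : ℕ, cc (d : ℤ) i • 𝒱.nmul ((i : ℤ) - 2) a b})

include hgr in
lemma GS_le_Vd (w : ℕ) : Submodule.span ℂ (GS 𝒱 Vd w) ≤ Vd w := by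
  rw [Submodule.span_le]
  rintro y ⟨d, e, a, b, ha, hb, hde, rfl⟩
  exact hgrW 𝒱 Vd hgr (-2) ha hb (by push_cast; omega)

include hgr in
lemma M'_le_W (w : ℕ) : M' 𝒱 Vd w ≤ W Vd w := by
  rw [M', Submodule.span_le]
  rintro y ⟨d, e, a, b, ha, hb, hde, rfl⟩
  exact Vd_le_W Vd hde (hgrW 𝒱 Vd hgr (-2) ha hb (by push_cast; ring))

include hgr hzero hOV in
lemma spade : ∀ (w p : ℕ) (c : V), c ∈ M' 𝒱 Vd w → ∀ (s : Finset ℕ) (x : ℕ → V),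
    (∀ f ∈ s, x f ∈ Vd f) → c = ∑ f ∈ s, x f → (∀ f ∈ s, p < f → x f ∈ OV) →
    c ∈ OV ⊔ M' 𝒱 Vd p := by
  classical
  intro w
  induction w with
  | zero =>
    intro p c hc _ _ _ _ _
    exact Submodule.mem_sup_right (M'_mono 𝒱 Vd (Nat.zero_le p) hc)
  | succ w ih =>
    intro p c hc s x hx hsum hov
    by_cases hwp : w + 1 ≤ p
    · exact Submodule.mem_sup_right (M'_mono 𝒱 Vd hwp hc)
    · have hpw : p < w + 1 := by omega
      rw [M'_succ] at hc
      obtain ⟨b, hb, a, ha, hba⟩ := Submodule.mem_sup.mp hc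
      have haVd : a ∈ Vd (w+1) := GS_le_Vd 𝒱 Vd hgr (w+1) ha
      -- decompose b with weights ≤ w
      obtain ⟨t, y, htw, hty, hbsum⟩ :=
        dec_of_mem_biSup Vd (P := fun d => d ≤ w) (M'_le_W 𝒱 Vd hgr w hb)
      have hwt : (w+1) ∉ t := fun hmem => by have := htw _ hmem; omega
      -- second decomposition of c
      set y' : ℕ → V := fun f => if f = w + 1 then a else y f with hy'def
      have hy' : ∀ f ∈ insert (w+1) t, y' f ∈ Vd f := by
        intro f hf
        rcases Finset.mem_insert.mp hf with rfl | hf'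
        · simpa [hy'def] using haVd
        · have : f ≠ w + 1 := fun hc => hwt (hc ▸ hf')
          simpa [hy'def, this] using hty f hf'
      have hcsum2 : ∑ f ∈ s, x f = ∑ f ∈ insert (w+1) t, y' f := by
        rw [Finset.sum_insert hwt]
        have : ∑ f ∈ t, y' f = ∑ f ∈ t, y f :=
          Finset.sum_congr rfl fun f hf => by
            have : f ≠ w + 1 := fun hc => hwt (hc ▸ hf)
            simp [hy'def, this]
        rw [this, ← hbsum, ← hsum, ← hba]
        simp [hy'def]
        abel
      have hcomp := decUnique 𝒱 Vd OV hgr hzero hOV hx hy' hcsum2 (w+1)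
      have hcomp2 : (if w + 1 ∈ s then x (w+1) else 0) - a ∈ OV := by
        simpa [hy'def] using hcomp
      have hxw : (if w + 1 ∈ s then x (w+1) else 0) ∈ OV := by
        split
        · exact hov (w+1) ‹_› hpw
        · exact OV.zero_mem
      have haOV : a ∈ OV := by
        have h := sub_mem hxw hcomp2
        simpa using h
      -- new decomposition of b = c - a
      set s3 := insert (w+1) (s.erase (w+1)) with hs3
      set x3 : ℕ → V := fun f =>
        if f = w + 1 then (if w + 1 ∈ s then x (w+1) else 0) - a else x f with hx3def
      have hx3 : ∀ f ∈ s3, x3 f ∈ Vd f := by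
        intro f hf
        rcases Finset.mem_insert.mp hf with rfl | hf'
        · simp only [hx3def, if_pos rfl]
          apply sub_mem _ haVd
          split
          · exact hx _ ‹_›
          · exact (Vd _).zero_mem
        · have hne : f ≠ w + 1 := Finset.ne_of_mem_erase hf'
          simpa [hx3def, hne] using hx f (Finset.mem_of_mem_erase hf')
      have hbsum3 : b = ∑ f ∈ s3, x3 f := by
        rw [hs3, Finset.sum_insert (Finset.notMem_erase _ _)]
        have h1 : ∑ f ∈ s.erase (w+1), x3 f = ∑ f ∈ s.erase (w+1), x f :=
          Finset.sum_congr rfl fun f hf => by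
            simp [hx3def, Finset.ne_of_mem_erase hf]
        have h2 : ∑ f ∈ s, x f
            = (if w + 1 ∈ s then x (w+1) else 0) + ∑ f ∈ s.erase (w+1), x f := by
          by_cases hmem : w + 1 ∈ s
          · rw [if_pos hmem, Finset.add_sum_erase _ _ hmem]
          · rw [if_neg hmem, Finset.erase_eq_of_notMem hmem, zero_add]
        have hb' : b = c - a := by rw [← hba]; abel
        rw [h1, hb', hsum, h2]
        simp only [hx3def, if_pos rfl]
        abel
      have hov3 : ∀ f ∈ s3, p < f → x3 f ∈ OV := by
        intro f hf hpf
        rcases Finset.mem_insert.mp hf with rfl | hf'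
        · simp only [hx3def, if_pos rfl]
          exact sub_mem hxw haOV
        · have hne : f ≠ w + 1 := Finset.ne_of_mem_erase hf'
          simpa [hx3def, hne] using hov f (Finset.mem_of_mem_erase hf') hpf
      have hbmem := ih p b hb s3 x3 hx3 hbsum3 hov3
      rw [← hba]
      exact add_mem hbmem (Submodule.mem_sup_left haOV)

include hgr hzero hOV in
lemma M'_le (p : ℕ) : M' 𝒱 Vd p ≤ OV ⊔ Wm Vd p := by
  rw [M', Submodule.span_le]
  rintro g ⟨d, e, a, b, ha, hb, hde, rfl⟩
  have hΓ := gen_mem_OV 𝒱 Vd OV hOV ha b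
  have h0 : (0 : ℕ) ∈ Finset.range (d+1) := by simp
  have hsplit : (∑ i ∈ Finset.range (d+1), cc d i • 𝒱.nmul ((i : ℤ) - 2) a b)
      = 𝒱.nmul (-2) a b + ∑ i ∈ (Finset.range (d+1)).erase 0, cc d i • 𝒱.nmul ((i : ℤ) - 2) a b := by
    rw [← Finset.add_sum_erase _ _ h0]
    norm_num [cc_zero]
  have hrest : (∑ i ∈ (Finset.range (d+1)).erase 0, cc d i • 𝒱.nmul ((i : ℤ) - 2) a b)
      ∈ Wm Vd p := by
    apply Submodule.sum_mem
    intro i hi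
    have hi1 : 1 ≤ i := Nat.one_le_iff_ne_zero.mpr (Finset.ne_of_mem_erase hi)
    have hid : i ≤ d := by
      have := Finset.mem_of_mem_erase hi
      simp only [Finset.mem_range] at this
      omega
    apply Submodule.smul_mem
    by_cases hw : (0 : ℤ) ≤ (d : ℤ) + e - ((i : ℤ) - 2) - 1
    · have hww : ((d + e + 1 - i : ℕ) : ℤ) = (d : ℤ) + e - ((i : ℤ) - 2) - 1 := by
        push_cast [Nat.cast_sub (by omega : i ≤ d + e + 1)]
        ring
      have hmem := hgrW 𝒱 Vd hgr ((i : ℤ) - 2) ha hb hww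
      exact Vd_le_Wm Vd (by omega) hmem
    · rw [hgr0 𝒱 Vd hgr ((i : ℤ) - 2) ha hb (by omega)]
      exact (Wm Vd p).zero_mem
  have : 𝒱.nmul (-2) a b
      = (∑ i ∈ Finset.range (d+1), cc d i • 𝒱.nmul ((i : ℤ) - 2) a b)
        - ∑ i ∈ (Finset.range (d+1)).erase 0, cc d i • 𝒱.nmul ((i : ℤ) - 2) a b := by
    rw [hsplit]; abel
  rw [this]
  exact sub_mem (Submodule.mem_sup_left hΓ) (Submodule.mem_sup_right hrest)

/-- bilinear version of `nmul` -/
noncomputable def Bn (n : ℤ) : V →ₗ[ℂ] V →ₗ[ℂ] V :=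
  LinearMap.mk₂ ℂ (𝒱.nmul n) (fun a b c => 𝒱.nmul_add_left n a b c)
    (fun s a b => 𝒱.nmul_smul_left n s a b)
    (fun a b c => 𝒱.nmul_add_right n a b c)
    (fun s a b => 𝒱.nmul_smul_right n s a b)

variable (htop : (⨆ d, Vd d) = ⊤)

include htop in
lemma dec_top (v : V) : ∃ (s : Finset ℕ) (x : ℕ → V), (∀ f ∈ s, x f ∈ Vd f) ∧
    v = ∑ f ∈ s, x f := by
  have hv : v ∈ ⨆ d, ⨆ (_ : True), Vd d := by
    simp only [iSup_true]
    rw [htop]; trivial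
  obtain ⟨s, x, _, hx, hsum⟩ := dec_of_mem_biSup Vd hv
  exact ⟨s, x, hx, hsum⟩

include htop in
lemma C2_le (hC2V : C2V = Submodule.span ℂ {y : V | ∃ a b : V, y = 𝒱.nmul (-2) a b}) :
    C2V ≤ ⨆ w, M' 𝒱 Vd w := by
  rw [hC2V, Submodule.span_le]
  rintro y ⟨aa, bb, rfl⟩
  obtain ⟨s, xa, hxa, rfl⟩ := dec_top Vd htop aa
  obtain ⟨t, xb, hxb, rfl⟩ := dec_top Vd htop bb
  have hexp : 𝒱.nmul (-2) (∑ f ∈ s, xa f) (∑ g ∈ t, xb g)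
      = ∑ f ∈ s, ∑ g ∈ t, 𝒱.nmul (-2) (xa f) (xb g) := by
    have h1 : 𝒱.nmul (-2) (∑ f ∈ s, xa f) (∑ g ∈ t, xb g)
        = Bn 𝒱 (-2) (∑ f ∈ s, xa f) (∑ g ∈ t, xb g) := rfl
    rw [h1, map_sum]
    have hg : ∀ g, ((Bn 𝒱 (-2)) (∑ f ∈ s, xa f)) (xb g)
        = ∑ f ∈ s, 𝒱.nmul (-2) (xa f) (xb g) := by
      intro g
      rw [map_sum, LinearMap.sum_apply]
      rfl
    rw [Finset.sum_congr rfl fun g _ => hg g]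
    exact Finset.sum_comm
  rw [hexp]
  apply Submodule.sum_mem
  intro f hf
  apply Submodule.sum_mem
  intro g hg
  apply Submodule.mem_iSup_of_mem (f + g + 1)
  exact Submodule.subset_span ⟨f, g, xa f, xb g, hxa f hf, hxb g hg, le_rfl, rfl⟩

lemma exists_M' {c : V} (hc : c ∈ ⨆ w, M' 𝒱 Vd w) : ∃ w, c ∈ M' 𝒱 Vd w := by
  have hdir : Directed (· ≤ ·) (fun w => M' 𝒱 Vd w) :=
    Monotone.directed_le fun w w' h => M'_mono 𝒱 Vd h
  exact (Submodule.mem_iSup_of_directed _ hdir).mp hc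


include hgr hzero hOV htop in
lemma main_fin (hC2V : C2V = Submodule.span ℂ {y : V | ∃ a b : V, y = 𝒱.nmul (-2) a b})
    (hC2fin : FiniteDimensional ℂ (V ⧸ C2V)) :
    FiniteDimensional ℂ (V ⧸ OV) := by
  classical
  set K' : ℕ → Submodule ℂ V := fun p => Vd p ⊓ (Wm Vd p ⊔ C2V) with hK'
  have hK'le : ∀ p, K' p ≤ Vd p := fun p => inf_le_left
  -- choose complements of K' p inside Vd p
  have hcompl : ∀ p : ℕ, ∃ Y : Submodule ℂ V,
      Y ≤ Vd p ∧ (Y ⊓ K' p = ⊥) ∧ (Y ⊔ K' p = Vd p) := by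
    intro p
    obtain ⟨q, hq⟩ := Submodule.exists_isCompl ((K' p).comap (Vd p).subtype)
    have hKmap : Submodule.map (Vd p).subtype ((K' p).comap (Vd p).subtype) = K' p := by
      rw [Submodule.map_comap_subtype]
      exact inf_eq_right.mpr (hK'le p)
    refine ⟨Submodule.map (Vd p).subtype q, Submodule.map_subtype_le _ _, ?_, ?_⟩
    · rw [← hKmap, ← Submodule.map_inf _ (Submodule.injective_subtype (Vd p)),
        hq.symm.inf_eq_bot, Submodule.map_bot]
    · rw [← hKmap, ← Submodule.map_sup, hq.symm.sup_eq_top, Submodule.map_top,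
        Submodule.range_subtype]
  choose Y' hYle hYinf hYsup using hcompl
  set U₀ : Submodule ℂ V := (⨆ p, Y' p) ⊔ (ℂ ∙ 𝒱.one) with hU₀
  -- (⨆ Y') ∩ C2V = 0
  have hdisj : ∀ v ∈ (⨆ p, Y' p), v ∈ C2V → v = 0 := by
    intro v hv hvC
    rw [Submodule.mem_iSup_iff_exists_finsupp] at hv
    obtain ⟨g, hg, hsum⟩ := hv
    by_contra hne
    have hsupp : g.support.Nonempty := by
      by_contra h
      rw [Finset.not_nonempty_iff_eq_empty] at h
      exact hne (by rw [← hsum, Finsupp.sum, h]; simp)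
    set q := g.support.max' hsupp with hq
    have hqmem : q ∈ g.support := Finset.max'_mem _ _
    have hr : (∑ f ∈ g.support.erase q, g f) ∈ Wm Vd q := by
      apply Submodule.sum_mem
      intro f hf
      have hfq : f < q := lt_of_le_of_ne
        (Finset.le_max' _ _ (Finset.mem_of_mem_erase hf)) (Finset.ne_of_mem_erase hf)
      exact Vd_le_Wm Vd hfq (hYle f (hg f))
    have hsum' : v = g q + ∑ f ∈ g.support.erase q, g f := by
      rw [← hsum, Finsupp.sum, ← Finset.add_sum_erase _ _ hqmem]
    have hgq : g q ∈ K' q := by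
      rw [hK']
      refine ⟨hYle q (hg q), ?_⟩
      have hgq' : g q = v - ∑ f ∈ g.support.erase q, g f := by rw [hsum']; abel
      rw [hgq']
      exact sub_mem (Submodule.mem_sup_right hvC) (Submodule.mem_sup_left hr)
    have hin : g q ∈ Y' q ⊓ K' q := ⟨hg q, hgq⟩
    rw [hYinf q] at hin
    exact Finsupp.mem_support_iff.mp hqmem (by simpa using hin)
  -- ⨆ Y' is finite dimensional
  haveI hYfin : FiniteDimensional ℂ ↥(⨆ p, Y' p) := by
    have hinj : Function.Injective ((C2V.mkQ).comp (⨆ p, Y' p).subtype) := by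
      apply LinearMap.ker_eq_bot.mp
      apply (Submodule.eq_bot_iff _).mpr
      intro m hm
      simp only [LinearMap.mem_ker, LinearMap.comp_apply, Submodule.coe_subtype,
        Submodule.mkQ_apply, Submodule.Quotient.mk_eq_zero] at hm
      exact Subtype.ext (hdisj m.val m.2 hm)
    exact FiniteDimensional.of_injective _ hinj
  haveI hU₀fin : FiniteDimensional ℂ ↥U₀ := by
    rw [hU₀]
    infer_instance
  -- main induction
  have hW : ∀ p : ℕ, W Vd p ≤ U₀ ⊔ OV := by
    intro p
    induction p using Nat.strong_induction_on with
    | _ p ih =>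
    have hWm : Wm Vd p ≤ U₀ ⊔ OV :=
      iSup₂_le fun d hd => (Vd_le_W Vd le_rfl).trans (ih d hd)
    have hVd : Vd p ≤ U₀ ⊔ OV := by
      intro z hz
      rw [← hYsup p] at hz
      obtain ⟨y, hy, k, hk, rfl⟩ := Submodule.mem_sup.mp hz
      refine add_mem (Submodule.mem_sup_left ?_) ?_
      · exact le_sup_left (a := ⨆ p, Y' p) (le_iSup Y' p hy)
      obtain ⟨hkVd, hkWC⟩ := hk
      obtain ⟨ω, hω, c, hc, hωc⟩ := Submodule.mem_sup.mp hkWC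
      have hcW : c ∈ W Vd p := by
        have hck : c = k - ω := by rw [← hωc]; abel
        rw [hck]
        exact sub_mem (Vd_le_W Vd le_rfl hkVd) ((Wm_le_W Vd p) hω)
      obtain ⟨w, hw⟩ := exists_M' 𝒱 Vd (C2_le 𝒱 Vd C2V htop hC2V hc)
      obtain ⟨s, x, hsP, hsx, hsum⟩ := dec_of_mem_biSup Vd (P := fun d => d ≤ p) hcW
      have hspade := spade 𝒱 Vd OV hgr hzero hOV w p c hw s x hsx hsum
        (fun f hf hpf => absurd (hsP f hf) (by omega))
      have hOVM : (OV ⊔ M' 𝒱 Vd p : Submodule ℂ V) ≤ U₀ ⊔ OV :=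
        sup_le le_sup_right ((M'_le 𝒱 Vd OV hgr hzero hOV p).trans
          (sup_le le_sup_right hWm))
      have hcmem : c ∈ U₀ ⊔ OV := hOVM hspade
      have hωmem : ω ∈ U₀ ⊔ OV := hWm hω
      rw [← hωc]
      exact add_mem hωmem hcmem
    apply iSup₂_le
    intro d hd
    rcases Nat.lt_or_ge d p with h | h
    · exact (Vd_le_W Vd le_rfl).trans (ih d h)
    · have : d = p := by omega
      exact this ▸ hVd
  have htople : (⊤ : Submodule ℂ V) ≤ U₀ ⊔ OV := by
    rw [← htop]
    exact iSup_le fun d => (Vd_le_W Vd le_rfl).trans (hW d)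
  have hsurj : Function.Surjective ((OV.mkQ).comp U₀.subtype) := by
    intro qq
    obtain ⟨v, rfl⟩ := Submodule.mkQ_surjective OV qq
    obtain ⟨u, hu, o, ho, huo⟩ := Submodule.mem_sup.mp (htople trivial : v ∈ U₀ ⊔ OV)
    refine ⟨⟨u, hu⟩, ?_⟩
    simp only [LinearMap.comp_apply, Submodule.coe_subtype, Submodule.mkQ_apply]
    rw [← huo]
    rw [Submodule.Quotient.mk_add]
    rw [(Submodule.Quotient.mk_eq_zero OV).2 ho, add_zero]
  exact Module.Finite.of_surjective _ hsurj

end Hyp2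

end Stmt19

/-- Let `V` be a `ℤ_{≥0}`-graded conformal vertex algebra with
`V₀ = ℂ𝟙` whose `C₂`-algebra `R_V = V/C₂(V)` is finite-dimensional.  Then every
term `F_p A(V)` of the weight filtration of Zhu's algebra (hence every graded
component of `gr_F A(V)`) is finite-dimensional, the filtration stabilizes, and
`A(V) = V/O(V)` is finite-dimensional. -/
theorem stmt19 {V : Type*} [AddCommGroup V] [Module ℂ V] (𝒱 : VertexAlg V)
    (Vd : ℕ → Submodule ℂ V)
    (htop : (⨆ d, Vd d) = ⊤)
    (hzero : Vd 0 = Submodule.span ℂ {𝒱.one})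
    (hgr : ∀ (d e : ℕ) (n : ℤ) (a b : V), a ∈ Vd d → b ∈ Vd e →
      𝒱.nmul n a b ∈ ⨆ (d' : ℕ) (_ : (d' : ℤ) = (d : ℤ) + e - n - 1), Vd d')
    (C2V : Submodule ℂ V)
    (hC2V : C2V = Submodule.span ℂ {y : V | ∃ a b : V, y = 𝒱.nmul (-2) a b})
    (OV : Submodule ℂ V)
    (hOV : OV = Submodule.span ℂ {y : V | ∃ (d : ℕ) (a b : V), a ∈ Vd d ∧
      y = ∑ᶠ i : ℕ, cc (d : ℤ) i • 𝒱.nmul ((i : ℤ) - 2) a b})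
    (F : ℤ → Submodule ℂ (V ⧸ OV))
    (hFdef : ∀ p : ℤ, F p = Submodule.map OV.mkQ (⨆ d ∈ {d : ℕ | (d : ℤ) ≤ p}, Vd d))
    (hC2fin : FiniteDimensional ℂ (V ⧸ C2V)) :
    (∀ p : ℤ, FiniteDimensional ℂ ↥(F p)) ∧
    (∃ N : ℤ, ∀ p : ℤ, N ≤ p → F p = F N) ∧
    FiniteDimensional ℂ (V ⧸ OV) := by
  haveI hfin : FiniteDimensional ℂ (V ⧸ OV) :=
    Stmt19.main_fin 𝒱 Vd OV C2V hgr hzero hOV htop hC2V hC2fin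
  refine ⟨fun p => inferInstance, ?_, hfin⟩
  have hmono : ∀ {p q : ℤ}, p ≤ q → F p ≤ F q := by
    intro p q hpq
    rw [hFdef p, hFdef q]
    apply Submodule.map_mono
    exact biSup_mono fun d hd => le_trans hd hpq
  obtain ⟨N, hN⟩ : ∃ N : ℤ, ∀ p : ℤ,
      Module.finrank ℂ ↥(F p) ≤ Module.finrank ℂ ↥(F N) := by
    have hbdd : BddAbove (Set.range fun p : ℤ => Module.finrank ℂ ↥(F p)) :=
      ⟨Module.finrank ℂ (V ⧸ OV), by rintro m ⟨p, rfl⟩; exact Submodule.finrank_le (F p)⟩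
    have hne : (Set.range fun p : ℤ => Module.finrank ℂ ↥(F p)).Nonempty := ⟨_, ⟨0, rfl⟩⟩
    obtain ⟨N, hN⟩ := Nat.sSup_mem hne hbdd
    exact ⟨N, fun p => le_of_le_of_eq (le_csSup hbdd ⟨p, rfl⟩) hN.symm⟩
  exact ⟨N, fun p hp => (Submodule.eq_of_le_of_finrank_le (hmono hp) (hN p)).symm⟩
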